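/- Under assumptions (H.2) and (H.5), for every polynomial function f of degree at most 2q with q ≤ 2κ, there exists a nonnegative polynomial function g of degree at most 2q such that for all n ∈ ℕ and all x ∈ ℝ, |E_x[f(Y_n)]| ≤ g(x). -/

import Mathlib

open MeasureTheory ProbabilityTheory Filter
open scoped ENNReal NNReal

noncomputable section

/-- the induced Markov chain started at `x`: `Y_0 = x`, `Y_{n+1} = A_{n+1} + B_{n+1} Y_n` -/
def Ychain {Ω : Type} (A B : ℕ → Ω → ℝ) (x : ℝ) : ℕ → Ω → ℝ
  | 0 => fun _ => x
  | n+1 => fun ω => A (n+1) ω + B (n+1) ω * Ychain A B x n ω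

/-- the stationary value `Y_∞ = Σ_{ℓ≥1} B_1⋯B_{ℓ-1} A_ℓ` -/
def Yinf {Ω : Type} (A B : ℕ → Ω → ℝ) (ω : Ω) : ℝ :=
  ∑' ℓ : ℕ, (∏ j ∈ Finset.Icc 1 ℓ, B j ω) * A (ℓ+1) ω

/-- the `L^s`-norm `‖Z‖_s = (E[|Z|^s])^{1/s}` -/
def momNorm {Ω : Type} [MeasurableSpace Ω] (P : Measure Ω) (s : ℕ) (Z : Ω → ℝ) : ℝ :=
  (∫ ω, |Z ω|^s ∂P) ^ ((s:ℝ)⁻¹)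

variable {Ω : Type} [MeasurableSpace Ω] {P : Measure Ω}

lemma ychain_meas {A B : ℕ → Ω → ℝ} (hmA : ∀ n, Measurable (A n)) (hmB : ∀ n, Measurable (B n))
    (x : ℝ) : ∀ n, Measurable (Ychain A B x n)
  | 0 => measurable_const
  | n+1 => ((hmA (n+1)).add ((hmB (n+1)).mul (ychain_meas hmA hmB x n)))

/-- auxiliary function computing the chain from the tuple of pairs -/
def ychainAux (x : ℝ) : (n : ℕ) → (Fin n → ℝ × ℝ) → ℝ
  | 0, _ => x
  | n+1, v => (v (Fin.last n)).1 + (v (Fin.last n)).2 * ychainAux x n (fun i => v i.castSucc)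

lemma ychainAux_meas (x : ℝ) : ∀ n, Measurable (ychainAux x n)
  | 0 => measurable_const
  | n+1 => by
      have h1 : Measurable fun v : Fin (n+1) → ℝ × ℝ => v (Fin.last n) := measurable_pi_apply _
      have h2 : Measurable fun v : Fin (n+1) → ℝ × ℝ => (fun i : Fin n => v i.castSucc) :=
        measurable_pi_lambda _ (fun i => measurable_pi_apply _)
      exact ((h1.fst).add ((h1.snd).mul ((ychainAux_meas x n).comp h2)))

lemma ychain_eq (A B : ℕ → Ω → ℝ) (x : ℝ) : ∀ n ω,
    Ychain A B x n ω = ychainAux x n (fun i : Fin n => (A (i+1) ω, B (i+1) ω))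
  | 0, ω => rfl
  | n+1, ω => by
      simp only [Ychain, ychainAux, Fin.val_last, Fin.coe_castSucc]
      rw [ychain_eq A B x n ω]

lemma ychain_indep {A B : ℕ → Ω → ℝ} (hmA : ∀ n, Measurable (A n)) (hmB : ∀ n, Measurable (B n))
    (hiid : iIndepFun (fun n ω => (A n ω, B n ω)) P)
    (x : ℝ) (n : ℕ) :
    IndepFun (fun ω => (A (n+1) ω, B (n+1) ω)) (Ychain A B x n) P := by
  have hmp : ∀ m, Measurable (fun ω => (A m ω, B m ω)) := fun m => (hmA m).prodMk (hmB m)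
  have hdisj : Disjoint ({n+1} : Finset ℕ) (Finset.Icc 1 n) := by
    simp only [Finset.disjoint_singleton_left, Finset.mem_Icc]; omega
  have h := hiid.indepFun_finset {n+1} (Finset.Icc 1 n) hdisj hmp
  -- h : IndepFun (fun ω (i : {n+1}) => pair i ω) (fun ω (i : Icc 1 n) => pair i ω) P
  have hφ : Measurable fun v : ({n+1} : Finset ℕ) → ℝ × ℝ =>
      v ⟨n+1, Finset.mem_singleton_self _⟩ := measurable_pi_apply _
  have hψm : Measurable fun v : (Finset.Icc 1 n : Finset ℕ) → ℝ × ℝ =>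
      ychainAux x n (fun i : Fin n => v ⟨i+1, Finset.mem_Icc.2 ⟨by omega, by omega⟩⟩) :=
    (ychainAux_meas x n).comp (measurable_pi_lambda _ (fun i => measurable_pi_apply _))
  have := h.comp hφ hψm
  convert this using 1
  · rfl
  funext ω
  rw [ychain_eq A B x n ω]
  rfl

lemma eLpNorm_mul_indep {X Y : Ω → ℝ} (hX : Measurable X) (hY : Measurable Y)
    (hXY : IndepFun X Y P) {p : ℝ≥0∞} (hp0 : p ≠ 0) (hpt : p ≠ ∞) :
    eLpNorm (fun ω => X ω * Y ω) p P = eLpNorm X p P * eLpNorm Y p P := by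
  have hr : (0:ℝ) ≤ p.toReal := ENNReal.toReal_nonneg
  have hφ : Measurable fun t : ℝ => ((‖t‖₊ : ℝ≥0∞)) ^ p.toReal :=
    (measurable_nnnorm.coe_nnreal_ennreal).pow_const _
  have hind : IndepFun (fun ω => ((‖X ω‖₊ : ℝ≥0∞)) ^ p.toReal)
      (fun ω => ((‖Y ω‖₊ : ℝ≥0∞)) ^ p.toReal) P := hXY.comp hφ hφ
  rw [eLpNorm_eq_lintegral_rpow_enorm_toReal hp0 hpt, eLpNorm_eq_lintegral_rpow_enorm_toReal hp0 hpt,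
    eLpNorm_eq_lintegral_rpow_enorm_toReal hp0 hpt]
  simp only [enorm_eq_nnnorm]
  have h1 : ∀ ω, ((‖X ω * Y ω‖₊ : ℝ≥0∞)) ^ p.toReal
      = ((‖X ω‖₊ : ℝ≥0∞)) ^ p.toReal * ((‖Y ω‖₊ : ℝ≥0∞)) ^ p.toReal := by
    intro ω
    rw [nnnorm_mul, ENNReal.coe_mul, ENNReal.mul_rpow_of_nonneg _ _ hr]
  simp_rw [h1]
  have hmul := lintegral_mul_eq_lintegral_mul_lintegral_of_indepFun (hφ.comp hX) (hφ.comp hY) hind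
  simp only [Pi.mul_apply, Function.comp_apply] at hmul
  rw [hmul, ENNReal.mul_rpow_of_nonneg _ _ (by positivity)]

lemma ychain_eLpNorm_bound [IsProbabilityMeasure P] {A B : ℕ → Ω → ℝ}
    (hmA : ∀ n, Measurable (A n)) (hmB : ∀ n, Measurable (B n))
    (hiid : iIndepFun (fun n ω => (A n ω, B n ω)) P)
    (hident : ∀ n, 1 ≤ n →
      IdentDistrib (fun ω => (A n ω, B n ω)) (fun ω => (A 1 ω, B 1 ω)) P P)
    {p : ℝ≥0∞} (hp1 : 1 ≤ p) (hpt : p ≠ ∞)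
    (hrho : eLpNorm (B 1) p P < 1) (x : ℝ) :
    ∀ n, eLpNorm (Ychain A B x n) p P
      ≤ ENNReal.ofReal |x| + eLpNorm (A 1) p P * (1 - eLpNorm (B 1) p P)⁻¹ := by
  have hp0 : p ≠ 0 := by intro h; rw [h] at hp1; exact absurd hp1 (by simp)
  set α := eLpNorm (A 1) p P with hα
  set ρ := eLpNorm (B 1) p P with hρdef
  set K := α * (1 - ρ)⁻¹ with hKdef
  have h1 : (1:ℝ≥0∞) - ρ ≠ 0 := by
    simp only [ne_eq, tsub_eq_zero_iff_le, not_le]; exact hrho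
  have h2 : (1:ℝ≥0∞) - ρ ≠ ∞ := by
    exact ne_top_of_le_ne_top (by simp) tsub_le_self
  have hK : α + ρ * K = K := by
    have h3 : ((1:ℝ≥0∞)-ρ)*((1:ℝ≥0∞)-ρ)⁻¹ = 1 := ENNReal.mul_inv_cancel h1 h2
    calc α + ρ*K = α*(((1:ℝ≥0∞)-ρ)*((1:ℝ≥0∞)-ρ)⁻¹) + ρ*(α*((1:ℝ≥0∞)-ρ)⁻¹) := by
          rw [h3, mul_one]
      _ = (((1:ℝ≥0∞)-ρ) + ρ)*(α*((1:ℝ≥0∞)-ρ)⁻¹) := by ring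
      _ = K := by rw [tsub_add_cancel_of_le hrho.le, one_mul]
  intro n
  induction n with
  | zero =>
      have : eLpNorm (Ychain A B x 0) p P = ENNReal.ofReal |x| := by
        show eLpNorm (fun _ : Ω => x) p P = _
        rw [eLpNorm_const x hp0 (NeZero.ne' P).symm]
        simp [measure_univ, Real.enorm_eq_ofReal_abs]
      rw [this]
      exact le_add_right le_rfl
  | succ n ih =>
      have hYm := ychain_meas hmA hmB x n
      have hAeq : eLpNorm (A (n+1)) p P = α := by
        exact ((hident (n+1) (by omega)).comp measurable_fst).eLpNorm_eq p
      have hBeq : eLpNorm (B (n+1)) p P = ρ := by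
        exact ((hident (n+1) (by omega)).comp measurable_snd).eLpNorm_eq p
      have hindBY : IndepFun (B (n+1)) (Ychain A B x n) P :=
        (ychain_indep hmA hmB hiid x n).comp measurable_snd measurable_id
      have hstep : eLpNorm (Ychain A B x (n+1)) p P
          ≤ α + ρ * eLpNorm (Ychain A B x n) p P := by
        have htri : eLpNorm (Ychain A B x (n+1)) p P
            ≤ eLpNorm (A (n+1)) p P + eLpNorm (fun ω => B (n+1) ω * Ychain A B x n ω) p P := by
          exact eLpNorm_add_le (hmA (n+1)).aestronglyMeasurable
            (((hmB (n+1)).mul hYm).aestronglyMeasurable) hp1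
        rw [hAeq, eLpNorm_mul_indep (hmB (n+1)) hYm hindBY hp0 hpt, hBeq] at htri
        exact htri
      refine hstep.trans ?_
      calc α + ρ * eLpNorm (Ychain A B x n) p P
          ≤ α + ρ * (ENNReal.ofReal |x| + K) := by
            exact add_le_add_right (mul_le_mul_right ih ρ) α
        _ = ρ * ENNReal.ofReal |x| + (α + ρ * K) := by ring
        _ ≤ ENNReal.ofReal |x| + K := by
            rw [hK]
            exact add_le_add_left (mul_le_of_le_one_left zero_le hrho.le) K

lemma integrable_abs_add_pow [IsFiniteMeasure P] (co : ℝ) {e : Ω → ℝ} (hme : Measurable e)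
    (s : ℕ) (hint : Integrable (fun ω => |e ω|^s) P) :
    Integrable (fun ω => |co + e ω|^s) P := by
  refine Integrable.mono' (((integrable_const (|co|^s)).add hint).const_mul (2^s))
    (((measurable_const.add hme).abs.pow_const s).aestronglyMeasurable) ?_
  filter_upwards with ω
  rw [Real.norm_eq_abs, abs_of_nonneg (by positivity)]
  have h1 : |co + e ω| ≤ 2 * max |co| |e ω| := by
    refine (abs_add_le _ _).trans ?_
    rw [two_mul]; exact add_le_add (le_max_left _ _) (le_max_right _ _)
  calc |co + e ω|^s ≤ (2 * max |co| |e ω|)^s := by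
        exact pow_le_pow_left₀ (abs_nonneg _) h1 s
    _ = 2^s * (max |co| |e ω|)^s := mul_pow _ _ _
    _ ≤ 2^s * (|co|^s + |e ω|^s) := by
        refine mul_le_mul_of_nonneg_left ?_ (by positivity)
        rcases max_cases |co| |e ω| with ⟨h, _⟩ | ⟨h, _⟩ <;> rw [h] <;> nlinarith [pow_nonneg (abs_nonneg co) s, pow_nonneg (abs_nonneg (e ω)) s]
  
lemma lintegral_mix [IsProbabilityMeasure P] {zeta u v : Ω → ℝ}
    (hmz : Measurable zeta) (hmu : Measurable u) (hmv : Measurable v)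
    (hindu : IndepFun zeta u P) (hindv : IndepFun zeta v P) (r : ℝ) :
    ∫⁻ ω, (‖if zeta ω = 1 then u ω else v ω‖₊ : ℝ≥0∞) ^ r ∂P
      = P {ω | zeta ω = 1} * ∫⁻ ω, (‖u ω‖₊ : ℝ≥0∞)^r ∂P
        + (1 - P {ω | zeta ω = 1}) * ∫⁻ ω, (‖v ω‖₊ : ℝ≥0∞)^r ∂P := by
  have hset : MeasurableSet {ω | zeta ω = 1} := hmz (measurableSet_singleton 1)
  set χ1 : ℝ → ℝ≥0∞ := fun z => if z = 1 then 1 else 0 with hχ1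
  set χ0 : ℝ → ℝ≥0∞ := fun z => if z = 1 then 0 else 1 with hχ0
  have hmχ1 : Measurable χ1 := Measurable.ite (measurableSet_singleton 1) measurable_const measurable_const
  have hmχ0 : Measurable χ0 := Measurable.ite (measurableSet_singleton 1) measurable_const measurable_const
  have hψ : Measurable fun t : ℝ => ((‖t‖₊ : ℝ≥0∞)) ^ r :=
    (measurable_nnnorm.coe_nnreal_ennreal).pow_const _
  have hpt : ∀ ω, (‖if zeta ω = 1 then u ω else v ω‖₊ : ℝ≥0∞) ^ r
      = χ1 (zeta ω) * (‖u ω‖₊ : ℝ≥0∞)^r + χ0 (zeta ω) * (‖v ω‖₊ : ℝ≥0∞)^r := by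
    intro ω; by_cases h : zeta ω = 1 <;> simp [hχ1, hχ0, h]
  simp_rw [hpt]
  have hm1 : Measurable fun ω => χ1 (zeta ω) * (‖u ω‖₊ : ℝ≥0∞)^r :=
    ((hmχ1.comp hmz).mul (hψ.comp hmu))
  rw [lintegral_add_left hm1]
  have e1 : ∫⁻ ω, χ1 (zeta ω) * (‖u ω‖₊ : ℝ≥0∞)^r ∂P
      = (∫⁻ ω, χ1 (zeta ω) ∂P) * ∫⁻ ω, (‖u ω‖₊ : ℝ≥0∞)^r ∂P := by
    have h := lintegral_mul_eq_lintegral_mul_lintegral_of_indepFun (hmχ1.comp hmz)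
      (hψ.comp hmu) (hindu.comp hmχ1 hψ)
    simpa [Function.comp] using h
  have e0 : ∫⁻ ω, χ0 (zeta ω) * (‖v ω‖₊ : ℝ≥0∞)^r ∂P
      = (∫⁻ ω, χ0 (zeta ω) ∂P) * ∫⁻ ω, (‖v ω‖₊ : ℝ≥0∞)^r ∂P := by
    have h := lintegral_mul_eq_lintegral_mul_lintegral_of_indepFun (hmχ0.comp hmz)
      (hψ.comp hmv) (hindv.comp hmχ0 hψ)
    simpa [Function.comp] using h
  have i1 : ∫⁻ ω, χ1 (zeta ω) ∂P = P {ω | zeta ω = 1} := by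
    have : (fun ω => χ1 (zeta ω)) = Set.indicator {ω | zeta ω = 1} (fun _ => 1) := by
      funext ω; by_cases h : zeta ω = 1 <;> simp [hχ1, h, Set.indicator]
    rw [this]; exact lintegral_indicator_one hset
  have i0 : ∫⁻ ω, χ0 (zeta ω) ∂P = 1 - P {ω | zeta ω = 1} := by
    have : (fun ω => χ0 (zeta ω)) = Set.indicator {ω | zeta ω = 1}ᶜ (fun _ => 1) := by
      funext ω; by_cases h : zeta ω = 1 <;> simp [hχ0, h, Set.indicator]
    rw [this, ← prob_compl_eq_one_sub hset]; exact lintegral_indicator_one hset.compl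
  rw [e1, e0, i1, i0]

lemma lintegral_nnnorm_pow_eq {w : Ω → ℝ} (hmw : Measurable w) (s : ℕ)
    (hint : Integrable (fun ω => |w ω|^s) P) :
    ∫⁻ ω, (‖w ω‖₊ : ℝ≥0∞) ^ (s:ℝ) ∂P = ENNReal.ofReal (∫ ω, |w ω|^s ∂P) := by
  rw [ofReal_integral_eq_lintegral_ofReal hint
    (Filter.Eventually.of_forall (fun ω => by positivity))]
  congr 1
  funext ω
  rw [ENNReal.rpow_natCast, ← enorm_eq_nnnorm, Real.enorm_eq_ofReal_abs, ← ENNReal.ofReal_pow (abs_nonneg _)]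

lemma moment_from_eLpNorm [IsProbabilityMeasure P] {Y : Ω → ℝ} (hmY : Measurable Y)
    (s : ℕ) (hs : s ≠ 0) {M : ℝ≥0∞} (hM : M ≠ ∞)
    (hle : eLpNorm Y (s : ℝ≥0∞) P ≤ M) :
    Integrable (fun ω => |Y ω|^s) P ∧ ∫ ω, |Y ω|^s ∂P ≤ M.toReal ^ s := by
  have hp0 : ((s:ℕ) : ℝ≥0∞) ≠ 0 := by simpa using hs
  have hpt : ((s:ℕ) : ℝ≥0∞) ≠ ∞ := ENNReal.natCast_ne_top s
  have hr : (0:ℝ) < s := by positivity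
  rw [eLpNorm_eq_lintegral_rpow_enorm_toReal hp0 hpt] at hle
  have htr : ((s:ℕ):ℝ≥0∞).toReal = (s:ℝ) := by simp
  rw [htr] at hle
  have hlin : ∫⁻ ω, (‖Y ω‖₊ : ℝ≥0∞) ^ (s:ℝ) ∂P ≤ M ^ (s:ℝ) := by
    have := ENNReal.rpow_le_rpow hle (le_of_lt hr)
    rwa [← ENNReal.rpow_mul, one_div, inv_mul_cancel₀ (ne_of_gt hr), ENNReal.rpow_one] at this
  have hMs : M ^ (s:ℝ) ≠ ∞ := by
    exact ENNReal.rpow_ne_top_of_nonneg (le_of_lt hr) hM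
  have hfin : HasFiniteIntegral (fun ω => |Y ω|^s) P := by
    rw [hasFiniteIntegral_iff_ofReal (Filter.Eventually.of_forall (fun ω => by positivity))]
    have heq2 : ∀ ω, ENNReal.ofReal (|Y ω|^s) = (‖Y ω‖₊ : ℝ≥0∞) ^ (s:ℝ) := by
      intro ω
      rw [ENNReal.rpow_natCast, ← enorm_eq_nnnorm, Real.enorm_eq_ofReal_abs, ← ENNReal.ofReal_pow (abs_nonneg _)]
    simp_rw [heq2]
    exact lt_of_le_of_lt hlin (lt_top_iff_ne_top.2 hMs)
  have hint : Integrable (fun ω => |Y ω|^s) P :=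
    ⟨(hmY.abs.pow_const s).aestronglyMeasurable, hfin⟩
  refine ⟨hint, ?_⟩
  have heq : ∫ ω, |Y ω|^s ∂P = (∫⁻ ω, (‖Y ω‖₊ : ℝ≥0∞) ^ (s:ℝ) ∂P).toReal := by
    rw [lintegral_nnnorm_pow_eq hmY s hint, ENNReal.toReal_ofReal (integral_nonneg (fun ω => by positivity))]
  rw [heq]
  calc (∫⁻ ω, (‖Y ω‖₊ : ℝ≥0∞) ^ (s:ℝ) ∂P).toReal ≤ (M ^ (s:ℝ)).toReal :=
        ENNReal.toReal_mono hMs hlin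
    _ = M.toReal ^ s := by rw [← ENNReal.toReal_rpow, Real.rpow_natCast]


lemma two_pow_bound (x y : ℝ) (hx : 0 ≤ x) (hy : 0 ≤ y) (s : ℕ) :
    (x + y)^s ≤ 2^s * (x^s + y^s) := by
  have h1 : x + y ≤ 2 * max x y := by
    rw [two_mul]; exact add_le_add (le_max_left _ _) (le_max_right _ _)
  calc (x+y)^s ≤ (2 * max x y)^s := pow_le_pow_left₀ (by positivity) h1 s
    _ = 2^s * (max x y)^s := mul_pow _ _ _
    _ ≤ 2^s * (x^s + y^s) := by
        refine mul_le_mul_of_nonneg_left ?_ (by positivity)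
        rcases max_cases x y with ⟨h,_⟩ | ⟨h,_⟩ <;> rw [h] <;>
          nlinarith [pow_nonneg hx s, pow_nonneg hy s]

set_option maxHeartbeats 2000000 in
/-- **Lemma 4.5 of the paper (domination).** Under (H.2) and (H.5), for any polynomial `f`
of degree at most `2q` with `q ≤ 2κ` there is a nonnegative polynomial `g` of degree at
most `2q` such that `|E_x[f(Y_n)]| ≤ g(x)` for all `n` and `x`. -/
theorem inducedChain_domination
    [IsProbabilityMeasure P]
    (eps2 eta2 eps3 eta3 : Ω → ℝ) (a b c d p0 p1 p01 : ℝ) (gam kap : ℕ)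
    (A B : ℕ → Ω → ℝ) (zeta : Ω → ℝ)
    (hmeps2 : Measurable eps2) (hmeta2 : Measurable eta2)
    (hmeps3 : Measurable eps3) (hmeta3 : Measurable eta3)
    (hmA : ∀ n, Measurable (A n)) (hmB : ∀ n, Measurable (B n)) (hmzeta : Measurable zeta)
    -- (H.2)
    (hgam : 1 ≤ gam)
    (hmom : ∀ s : ℕ, s ≤ 4*gam →
      Integrable (fun ω => |eps2 ω|^s) P ∧ Integrable (fun ω => |eta2 ω|^s) P ∧
      Integrable (fun ω => |eps3 ω|^s) P ∧ Integrable (fun ω => |eta3 ω|^s) P)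
    (hmean : (∫ ω, eps2 ω ∂P = 0) ∧ (∫ ω, eps3 ω ∂P = 0) ∧
      (∫ ω, eta2 ω ∂P = 0) ∧ (∫ ω, eta3 ω ∂P = 0))
    (sige sigeta : ℝ)
    (hsige : (∫ ω, (eps2 ω)^2 ∂P = sige) ∧ (∫ ω, (eps3 ω)^2 ∂P = sige) ∧ 0 < sige)
    (hsigeta : (∫ ω, (eta2 ω)^2 ∂P = sigeta) ∧ (∫ ω, (eta3 ω)^2 ∂P = sigeta) ∧ 0 < sigeta)
    (hp : 0 ≤ p0 ∧ 0 ≤ p1 ∧ 0 ≤ p01 ∧ p0 + p1 + p01 ≤ 1 ∧ 0 < 2*p01 + p0 + p1)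
    -- (H.5)
    (hkap : 1 ≤ kap ∧ kap ≤ gam)
    (h5 : ((p0+p01)/(2*p01+p0+p1)) * ∫ ω, (b + eta2 ω)^(4*kap) ∂P
        + ((p1+p01)/(2*p01+p0+p1)) * ∫ ω, (d + eta3 ω)^(4*kap) ∂P < 1)
    -- the sequence (A_n, B_n) is i.i.d. with the distribution of
    -- (a_{2+ζ} + ε_{2+ζ}, b_{2+ζ} + η_{2+ζ}), ζ Bernoulli((p01+p1)/m) independent of the noise
    (hzeta01 : ∀ ω, zeta ω = 0 ∨ zeta ω = 1)
    (hzetalaw : P {ω | zeta ω = 1} = ENNReal.ofReal ((p01+p1)/(2*p01+p0+p1)))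
    (hzetaindep : IndepFun zeta (fun ω => (eps2 ω, eta2 ω, eps3 ω, eta3 ω)) P)
    (hiid : iIndepFun (fun n ω => (A n ω, B n ω)) P)
    (hident : ∀ n, 1 ≤ n →
      IdentDistrib (fun ω => (A n ω, B n ω)) (fun ω => (A 1 ω, B 1 ω)) P P)
    (hlaw : IdentDistrib (fun ω => (A 1 ω, B 1 ω))
      (fun ω => if zeta ω = 1 then (c + eps3 ω, d + eta3 ω) else (a + eps2 ω, b + eta2 ω)) P P)
    :
    ∀ q : ℕ, q ≤ 2*kap → ∀ f : Polynomial ℝ, f.natDegree ≤ 2*q →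
      ∃ g : Polynomial ℝ, g.natDegree ≤ 2*q ∧ (∀ x : ℝ, 0 ≤ g.eval x) ∧
        ∀ (n : ℕ) (x : ℝ), |∫ ω, f.eval (Ychain A B x n ω) ∂P| ≤ g.eval x := by
  intro q hq f hf
  rcases Nat.eq_zero_or_pos q with hq0 | hqpos
  · subst hq0
    simp only [Nat.mul_zero] at hf ⊢
    have hfc : f = Polynomial.C (f.coeff 0) := Polynomial.eq_C_of_natDegree_le_zero hf
    refine ⟨Polynomial.C |f.coeff 0|, by simp, fun x => by simp [abs_nonneg], fun n x => ?_⟩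
    rw [hfc]
    simp [integral_const, measure_univ]
  -- main case: q ≥ 1
  have hm0 : (0:ℝ) < 2*p01+p0+p1 := hp.2.2.2.2
  obtain ⟨hp0nn, hp1nn, hp01nn, hpsum, _⟩ := hp
  set w1 : ℝ := (p01+p1)/(2*p01+p0+p1) with hw1def
  set w0 : ℝ := (p0+p01)/(2*p01+p0+p1) with hw0def
  rw [show (p1+p01)/(2*p01+p0+p1) = w1 from by rw [hw1def]; ring_nf] at h5
  have hw1nn : 0 ≤ w1 := by positivity
  have hw0nn : 0 ≤ w0 := by positivity
  have hw01 : w0 + w1 = 1 := by rw [hw0def, hw1def, ← add_div, div_eq_one_iff_eq hm0.ne']; ring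
  set u : Ω → ℝ := fun ω => d + eta3 ω with hudef
  set v : Ω → ℝ := fun ω => b + eta2 ω with hvdef
  have hmu : Measurable u := measurable_const.add hmeta3
  have hmv : Measurable v := measurable_const.add hmeta2
  set W : Ω → ℝ := fun ω => if zeta ω = 1 then u ω else v ω with hWdef
  set WA : Ω → ℝ := fun ω => if zeta ω = 1 then c + eps3 ω else a + eps2 ω with hWAdef
  have hBW : IdentDistrib (B 1) W P P := by
    have h := hlaw.comp (measurable_snd (α := ℝ) (β := ℝ))
    have he : (Prod.snd ∘ fun ω =>
        if zeta ω = 1 then (c + eps3 ω, d + eta3 ω) else (a + eps2 ω, b + eta2 ω)) = W := by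
      funext ω; by_cases hz : zeta ω = 1 <;> simp [hWdef, hudef, hvdef, hz]
    rw [he] at h
    exact h
  have hAW : IdentDistrib (A 1) WA P P := by
    have h := hlaw.comp (measurable_fst (α := ℝ) (β := ℝ))
    have he : (Prod.fst ∘ fun ω =>
        if zeta ω = 1 then (c + eps3 ω, d + eta3 ω) else (a + eps2 ω, b + eta2 ω)) = WA := by
      funext ω; by_cases hz : zeta ω = 1 <;> simp [hWAdef, hz]
    rw [he] at h
    exact h
  set N4 : ℕ := 4*kap with hN4def
  have hN4pos : 0 < N4 := by omega
  have heven4 : Even N4 := ⟨2*kap, by omega⟩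
  set r4 : ℝ := (N4:ℝ) with hr4def
  have hr4pos : (0:ℝ) < r4 := by positivity
  have hint3 : Integrable (fun ω => |d + eta3 ω|^N4) P :=
    integrable_abs_add_pow d hmeta3 N4 ((hmom N4 (by omega)).2.2.2)
  have hint2 : Integrable (fun ω => |b + eta2 ω|^N4) P :=
    integrable_abs_add_pow b hmeta2 N4 ((hmom N4 (by omega)).2.1)
  have hintA3 : Integrable (fun ω => |c + eps3 ω|^N4) P :=
    integrable_abs_add_pow c hmeps3 N4 ((hmom N4 (by omega)).2.2.1)
  have hintA2 : Integrable (fun ω => |a + eps2 ω|^N4) P :=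
    integrable_abs_add_pow a hmeps2 N4 ((hmom N4 (by omega)).1)
  have hindu : IndepFun zeta u P := by
    have hφ : Measurable fun t : ℝ×ℝ×ℝ×ℝ => d + t.2.2.2 :=
      measurable_const.add (measurable_snd.comp (measurable_snd.comp measurable_snd))
    exact hzetaindep.comp measurable_id hφ
  have hindv : IndepFun zeta v P := by
    have hφ : Measurable fun t : ℝ×ℝ×ℝ×ℝ => b + t.2.1 :=
      measurable_const.add (measurable_fst.comp measurable_snd)
    exact hzetaindep.comp measurable_id hφ
  have hmix := lintegral_mix (P := P) hmzeta hmu hmv hindu hindv r4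
  have hE3 : ∫⁻ ω, (‖u ω‖₊:ℝ≥0∞)^r4 ∂P = ENNReal.ofReal (∫ ω, (d + eta3 ω)^N4 ∂P) := by
    rw [lintegral_nnnorm_pow_eq hmu N4 hint3]
    congr 1
    apply integral_congr_ae
    filter_upwards with ω
    exact heven4.pow_abs _
  have hE2 : ∫⁻ ω, (‖v ω‖₊:ℝ≥0∞)^r4 ∂P = ENNReal.ofReal (∫ ω, (b + eta2 ω)^N4 ∂P) := by
    rw [lintegral_nnnorm_pow_eq hmv N4 hint2]
    congr 1
    apply integral_congr_ae
    filter_upwards with ω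
    exact heven4.pow_abs _
  have hE3nn : 0 ≤ ∫ ω, (d + eta3 ω)^N4 ∂P :=
    integral_nonneg fun ω => heven4.pow_nonneg _
  have hE2nn : 0 ≤ ∫ ω, (b + eta2 ω)^N4 ∂P :=
    integral_nonneg fun ω => heven4.pow_nonneg _
  have hWlt : ∫⁻ ω, (‖W ω‖₊:ℝ≥0∞)^r4 ∂P < 1 := by
    rw [hmix, hE3, hE2, hzetalaw]
    have h1m : (1:ℝ≥0∞) - ENNReal.ofReal ((p01+p1)/(2*p01+p0+p1)) = ENNReal.ofReal w0 := by
      rw [← ENNReal.ofReal_one, ← ENNReal.ofReal_sub _ hw1nn]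
      congr 1
      linarith [hw01]
    rw [h1m, ← ENNReal.ofReal_mul hw1nn, ← ENNReal.ofReal_mul hw0nn,
      ← ENNReal.ofReal_add (by positivity) (by positivity)]
    rw [ENNReal.ofReal_lt_one]
    rw [hN4def]
    linarith [h5]
  set N4e : ℝ≥0∞ := (N4 : ℝ≥0∞) with hN4edef
  have hN4e0 : N4e ≠ 0 := by
    simp only [hN4edef, ne_eq, Nat.cast_eq_zero]; omega
  have hN4et : N4e ≠ ∞ := ENNReal.natCast_ne_top _
  have htoReal : N4e.toReal = r4 := by simp [hN4edef, hr4def]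
  have hB4lt : eLpNorm (B 1) N4e P < 1 := by
    rw [hBW.eLpNorm_eq N4e, eLpNorm_eq_lintegral_rpow_enorm_toReal hN4e0 hN4et, htoReal]
    calc (∫⁻ ω, (‖W ω‖₊:ℝ≥0∞)^r4 ∂P) ^ (1/r4) < 1^(1/r4) :=
          ENNReal.rpow_lt_rpow hWlt (by positivity)
      _ = 1 := ENNReal.one_rpow _
  set pq : ℝ≥0∞ := ((2*q : ℕ) : ℝ≥0∞) with hpqdef
  have hpq1 : 1 ≤ pq := by
    rw [hpqdef]
    exact_mod_cast Nat.one_le_cast.mpr (by omega : 1 ≤ 2*q)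
  have hpq0 : pq ≠ 0 := by
    intro h; rw [h] at hpq1; exact absurd hpq1 (by simp)
  have hpqt : pq ≠ ∞ := ENNReal.natCast_ne_top _
  have hple : pq ≤ N4e := by
    rw [hpqdef, hN4edef]
    exact_mod_cast (by omega : 2*q ≤ N4)
  have hrho : eLpNorm (B 1) pq P < 1 :=
    lt_of_le_of_lt (eLpNorm_le_eLpNorm_of_exponent_le hple (hmB 1).aestronglyMeasurable) hB4lt
  have hWAfin : ∫⁻ ω, (‖WA ω‖₊:ℝ≥0∞)^r4 ∂P < ∞ := by
    have hle : ∀ ω, (‖WA ω‖₊:ℝ≥0∞)^r4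
        ≤ (‖c + eps3 ω‖₊:ℝ≥0∞)^r4 + (‖a + eps2 ω‖₊:ℝ≥0∞)^r4 := by
      intro ω
      by_cases hz : zeta ω = 1
      · simp only [hWAdef, hz, if_true]
        exact le_add_right le_rfl
      · simp only [hWAdef, hz, if_false]
        exact le_add_left le_rfl
    calc ∫⁻ ω, (‖WA ω‖₊:ℝ≥0∞)^r4 ∂P
        ≤ ∫⁻ ω, ((‖c + eps3 ω‖₊:ℝ≥0∞)^r4 + (‖a + eps2 ω‖₊:ℝ≥0∞)^r4) ∂P :=
          lintegral_mono hle
      _ = (∫⁻ ω, (‖c + eps3 ω‖₊:ℝ≥0∞)^r4 ∂P) + ∫⁻ ω, (‖a + eps2 ω‖₊:ℝ≥0∞)^r4 ∂P := by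
          exact lintegral_add_left (((measurable_const.add hmeps3).nnnorm.coe_nnreal_ennreal).pow_const _) _
      _ < ∞ := by
          rw [lintegral_nnnorm_pow_eq (w := fun ω => c + eps3 ω) (measurable_const.add hmeps3) N4 hintA3,
            lintegral_nnnorm_pow_eq (w := fun ω => a + eps2 ω) (measurable_const.add hmeps2) N4 hintA2]
          exact ENNReal.add_lt_top.2 ⟨ENNReal.ofReal_lt_top, ENNReal.ofReal_lt_top⟩
  have hA4fin : eLpNorm (A 1) N4e P ≠ ∞ := by
    rw [hAW.eLpNorm_eq N4e, eLpNorm_eq_lintegral_rpow_enorm_toReal hN4e0 hN4et, htoReal]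
    exact ENNReal.rpow_ne_top_of_nonneg (by positivity) hWAfin.ne
  have halpha : eLpNorm (A 1) pq P ≠ ∞ :=
    ne_top_of_le_ne_top hA4fin
      (eLpNorm_le_eLpNorm_of_exponent_le hple (hmA 1).aestronglyMeasurable)
  set ρ := eLpNorm (B 1) pq P with hρdef
  set K := eLpNorm (A 1) pq P * (1 - ρ)⁻¹ with hKdef
  have hKtop : K ≠ ∞ := by
    refine ENNReal.mul_ne_top halpha (ENNReal.inv_ne_top.2 ?_)
    simp only [ne_eq, tsub_eq_zero_iff_le, not_le]
    exact hrho
  have hbound := ychain_eLpNorm_bound hmA hmB hiid hident hpq1 hpqt hrho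
  set Kr := K.toReal with hKrdef
  have hKrnn : 0 ≤ Kr := ENNReal.toReal_nonneg
  have hmom' : ∀ (n : ℕ) (x : ℝ), Integrable (fun ω => |Ychain A B x n ω|^(2*q)) P ∧
      ∫ ω, |Ychain A B x n ω|^(2*q) ∂P ≤ (|x| + Kr)^(2*q) := by
    intro n x
    have hM : (ENNReal.ofReal |x| + K) ≠ ∞ := ENNReal.add_ne_top.2 ⟨ENNReal.ofReal_ne_top, hKtop⟩
    have h := moment_from_eLpNorm (ychain_meas hmA hmB x n) (2*q) (by omega) hM (hbound x n)
    have hMtr : (ENNReal.ofReal |x| + K).toReal = |x| + Kr := by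
      rw [ENNReal.toReal_add ENNReal.ofReal_ne_top hKtop, ENNReal.toReal_ofReal (abs_nonneg x)]
    rwa [hMtr] at h
  -- the polynomial g
  set D := f.natDegree with hDdef
  set S := ∑ k ∈ Finset.range (D+1), |f.coeff k| with hSdef
  have hSnn : 0 ≤ S := Finset.sum_nonneg fun k _ => abs_nonneg _
  have hevenq : Even (2*q) := ⟨q, by ring⟩
  refine ⟨Polynomial.C (S * (1 + 2^(2*q) * Kr^(2*q))) + Polynomial.C (S * 2^(2*q)) * Polynomial.X^(2*q),
    ?_, ?_, ?_⟩
  · refine le_trans (Polynomial.natDegree_add_le _ _) ?_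
    simp only [Polynomial.natDegree_C, max_le_iff]
    refine ⟨by omega, ?_⟩
    refine le_trans (Polynomial.natDegree_C_mul_le _ _) ?_
    simp [Polynomial.natDegree_X_pow]
  · intro x
    simp only [Polynomial.eval_add, Polynomial.eval_C, Polynomial.eval_mul, Polynomial.eval_pow,
      Polynomial.eval_X]
    have hx2q : 0 ≤ x^(2*q) := hevenq.pow_nonneg x
    have h2q : (0:ℝ) ≤ 2^(2*q) := by positivity
    have hKq : (0:ℝ) ≤ Kr^(2*q) := by positivity
    nlinarith [mul_nonneg hSnn (by positivity : (0:ℝ) ≤ 1 + 2^(2*q)*Kr^(2*q)),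
      mul_nonneg (mul_nonneg hSnn h2q) hx2q]
  · intro n x
    obtain ⟨hYint, hYle⟩ := hmom' n x
    have hYm := ychain_meas hmA hmB x n
    have hintk : ∀ k, k ≤ 2*q → Integrable (fun ω => (Ychain A B x n ω)^k) P := by
      intro k hk
      refine Integrable.mono' ((integrable_const 1).add hYint)
        ((hYm.pow_const k).aestronglyMeasurable) ?_
      filter_upwards with ω
      simp only [Pi.add_apply]
      rw [Real.norm_eq_abs, abs_pow]
      rcases le_or_gt |Ychain A B x n ω| 1 with h | h
      · have h1 : |Ychain A B x n ω|^k ≤ 1 := pow_le_one₀ (abs_nonneg _) h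
        have h2 : 0 ≤ |Ychain A B x n ω|^(2*q) := by positivity
        linarith
      · have h1 : |Ychain A B x n ω|^k ≤ |Ychain A B x n ω|^(2*q) :=
          pow_le_pow_right₀ h.le hk
        linarith
    have hIk : ∀ k, k ≤ 2*q → |∫ ω, (Ychain A B x n ω)^k ∂P| ≤ 1 + (|x| + Kr)^(2*q) := by
      intro k hk
      have h1 : |∫ ω, (Ychain A B x n ω)^k ∂P| ≤ ∫ ω, |(Ychain A B x n ω)^k| ∂P := by
        have := norm_integral_le_integral_norm (μ := P) (fun ω => (Ychain A B x n ω)^k)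
        simpa [Real.norm_eq_abs] using this
      have h2 : ∫ ω, |(Ychain A B x n ω)^k| ∂P ≤ ∫ ω, (1 + |Ychain A B x n ω|^(2*q)) ∂P := by
        refine integral_mono (hintk k hk).abs ((integrable_const 1).add hYint) ?_
        intro ω
        show |Ychain A B x n ω ^ k| ≤ 1 + |Ychain A B x n ω| ^ (2*q)
        rw [abs_pow]
        rcases le_or_gt |Ychain A B x n ω| 1 with h | h
        · have ha : |Ychain A B x n ω|^k ≤ 1 := pow_le_one₀ (abs_nonneg _) h
          have hb : 0 ≤ |Ychain A B x n ω|^(2*q) := by positivity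
          linarith
        · have ha : |Ychain A B x n ω|^k ≤ |Ychain A B x n ω|^(2*q) :=
            pow_le_pow_right₀ h.le hk
          linarith
      have h3 : ∫ ω, (1 + |Ychain A B x n ω|^(2*q)) ∂P
          = 1 + ∫ ω, |Ychain A B x n ω|^(2*q) ∂P := by
        rw [integral_add (integrable_const 1) hYint, integral_const]
        simp [measure_univ]
      calc |∫ ω, (Ychain A B x n ω)^k ∂P| ≤ ∫ ω, |(Ychain A B x n ω)^k| ∂P := h1
        _ ≤ ∫ ω, (1 + |Ychain A B x n ω|^(2*q)) ∂P := h2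
        _ = 1 + ∫ ω, |Ychain A B x n ω|^(2*q) ∂P := h3
        _ ≤ 1 + (|x| + Kr)^(2*q) := by linarith
    have hsplit : ∫ ω, f.eval (Ychain A B x n ω) ∂P
        = ∑ k ∈ Finset.range (D+1), f.coeff k * ∫ ω, (Ychain A B x n ω)^k ∂P := by
      have h1 : (fun ω => f.eval (Ychain A B x n ω))
          = fun ω => ∑ k ∈ Finset.range (D+1), f.coeff k * (Ychain A B x n ω)^k := by
        funext ω
        exact Polynomial.eval_eq_sum_range _
      rw [h1, integral_finset_sum]
      · apply Finset.sum_congr rfl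
        intro k _
        exact integral_const_mul _ _
      · intro k hk
        have hkle : k ≤ 2*q := by
          have := Finset.mem_range.mp hk
          omega
        exact (hintk k hkle).const_mul _
    have hpow : (|x| + Kr)^(2*q) ≤ 2^(2*q) * (x^(2*q) + Kr^(2*q)) := by
      have hb : (|x| + Kr)^(2*q) ≤ 2^(2*q) * (|x|^(2*q) + Kr^(2*q)) :=
        two_pow_bound |x| Kr (abs_nonneg x) hKrnn (2*q)
      rwa [hevenq.pow_abs] at hb
    have hmain : |∑ k ∈ Finset.range (D+1), f.coeff k * ∫ ω, (Ychain A B x n ω)^k ∂P|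
        ≤ S * (1 + 2^(2*q) * (x^(2*q) + Kr^(2*q))) :=
      calc |∑ k ∈ Finset.range (D+1), f.coeff k * ∫ ω, (Ychain A B x n ω)^k ∂P|
        ≤ ∑ k ∈ Finset.range (D+1), |f.coeff k * ∫ ω, (Ychain A B x n ω)^k ∂P| :=
          Finset.abs_sum_le_sum_abs _ _
      _ ≤ ∑ k ∈ Finset.range (D+1), |f.coeff k| * (1 + (|x| + Kr)^(2*q)) := by
          refine Finset.sum_le_sum fun k hk => ?_
          rw [abs_mul]
          refine mul_le_mul_of_nonneg_left (hIk k ?_) (abs_nonneg _)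
          have := Finset.mem_range.mp hk
          omega
      _ = S * (1 + (|x| + Kr)^(2*q)) := by rw [← Finset.sum_mul]
      _ ≤ S * (1 + 2^(2*q) * (x^(2*q) + Kr^(2*q))) := by
          refine mul_le_mul_of_nonneg_left ?_ hSnn
          linarith
    rw [hsplit]
    refine hmain.trans (le_of_eq ?_)
    simp only [Polynomial.eval_add, Polynomial.eval_C, Polynomial.eval_mul,
      Polynomial.eval_pow, Polynomial.eval_X]
    ring
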